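/- For every real number x with 0 < x < 1, we have exp(x/(1 - x)) = ∏_{n=1}^{∞} (1 - x^n)^{-φ(n)/n}. -/

import Mathlib

open Filter Real

section Aux

variable {x : ℝ}

private noncomputable def gfun (x : ℝ) : ℕ × ℕ → ℝ := fun p =>
  ((Nat.totient (p.1 + 1) : ℝ) / (p.1 + 1)) * (x ^ ((p.1 + 1) * (p.2 + 1)) / (p.2 + 1))

private lemma gfun_nonneg (hx0 : 0 < x) (p : ℕ × ℕ) : 0 ≤ gfun x p := by
  unfold gfun; positivity

private lemma gfun_row (hx0 : 0 < x) (hx1 : x < 1) (n : ℕ) :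
    HasSum (fun k => gfun x (n, k))
      (((Nat.totient (n + 1) : ℝ) / (n + 1)) * (-Real.log (1 - x ^ (n + 1)))) := by
  have hy : |x ^ (n + 1)| < 1 := by
    rw [abs_of_nonneg (by positivity)]
    exact pow_lt_one₀ hx0.le hx1 (Nat.succ_ne_zero n)
  have h := (hasSum_pow_div_log_of_abs_lt_one hy).mul_left
    ((Nat.totient (n + 1) : ℝ) / (n + 1))
  convert h using 2 with k
  · rfl
  simp [gfun, pow_mul]

/-- The sigma type grouping pairs by the product. -/
private abbrev Tt : Type := Σ m : ℕ, {p : ℕ × ℕ // p ∈ Nat.divisorsAntidiagonal (m + 1)}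

private def eT : Tt ≃ ℕ × ℕ where
  toFun q := ((q.2 : ℕ × ℕ).1 - 1, (q.2 : ℕ × ℕ).2 - 1)
  invFun p := ⟨(p.1 + 1) * (p.2 + 1) - 1, ⟨(p.1 + 1, p.2 + 1), by
    have h1 : 1 ≤ (p.1 + 1) * (p.2 + 1) := Nat.one_le_iff_ne_zero.mpr (by positivity)
    rw [Nat.mem_divisorsAntidiagonal]
    exact ⟨by dsimp only; omega, by omega⟩⟩⟩
  left_inv := by
    rintro ⟨m, ⟨⟨d, e⟩, h⟩⟩
    have h' := h
    rw [Nat.mem_divisorsAntidiagonal] at h'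
    have h1 : d * e = m + 1 := h'.1
    have hd : 1 ≤ d := Nat.one_le_iff_ne_zero.mpr (by rintro rfl; simp at h1)
    have he : 1 ≤ e := Nat.one_le_iff_ne_zero.mpr (by rintro rfl; simp at h1)
    have hm : (d - 1 + 1) * (e - 1 + 1) - 1 = m := by
      rw [Nat.sub_add_cancel hd, Nat.sub_add_cancel he]; omega
    dsimp only
    refine Sigma.ext hm ?_
    rw [Subtype.heq_iff_coe_eq]
    · simp only [Prod.mk.injEq]
      omega
    · intro y; dsimp only; rw [hm]
  right_inv := by
    rintro ⟨n, k⟩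
    simp

private lemma gfun_term {m : ℕ} {p : ℕ × ℕ} (hp : p ∈ Nat.divisorsAntidiagonal (m + 1)) :
    gfun x (p.1 - 1, p.2 - 1) = (Nat.totient p.1 : ℝ) * x ^ (m + 1) / (m + 1) := by
  obtain ⟨d, e⟩ := p
  rw [Nat.mem_divisorsAntidiagonal] at hp
  have h1 : d * e = m + 1 := hp.1
  have hd : 1 ≤ d := Nat.one_le_iff_ne_zero.mpr (by rintro rfl; simp at h1)
  have he : 1 ≤ e := Nat.one_le_iff_ne_zero.mpr (by rintro rfl; simp at h1)
  have hd' : d - 1 + 1 = d := Nat.sub_add_cancel hd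
  have he' : e - 1 + 1 = e := Nat.sub_add_cancel he
  unfold gfun
  dsimp only
  rw [hd', he', h1]
  have hdR : (0 : ℝ) < d := by exact_mod_cast hd
  have heR : (0 : ℝ) < e := by exact_mod_cast he
  have hde : (d : ℝ) * e = (m : ℝ) + 1 := by exact_mod_cast h1
  rw [← hde]
  field_simp
  rw [Nat.cast_sub hd, Nat.cast_sub he]
  ring

private lemma gfun_fiber (m : ℕ) :
    HasSum (fun c : {p : ℕ × ℕ // p ∈ Nat.divisorsAntidiagonal (m + 1)} =>
      gfun x (eT ⟨m, c⟩)) (x ^ (m + 1)) := by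
  have h := hasSum_fintype (fun c : {p : ℕ × ℕ // p ∈ Nat.divisorsAntidiagonal (m + 1)} =>
    gfun x (eT ⟨m, c⟩))
  convert h using 1
  have e1 : ∑ c : {p : ℕ × ℕ // p ∈ Nat.divisorsAntidiagonal (m + 1)},
      gfun x (eT ⟨m, c⟩)
      = ∑ p ∈ Nat.divisorsAntidiagonal (m + 1), gfun x (p.1 - 1, p.2 - 1) := by
    rw [← Finset.sum_coe_sort (Nat.divisorsAntidiagonal (m + 1))
      (fun p : ℕ × ℕ => gfun x (p.1 - 1, p.2 - 1))]
    rfl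
  rw [e1]
  have e2 : ∑ p ∈ Nat.divisorsAntidiagonal (m + 1), gfun x (p.1 - 1, p.2 - 1)
      = ∑ p ∈ Nat.divisorsAntidiagonal (m + 1),
          (Nat.totient p.1 : ℝ) * x ^ (m + 1) / (m + 1) :=
    Finset.sum_congr rfl fun p hp => gfun_term hp
  rw [e2]
  rw [Nat.sum_divisorsAntidiagonal (fun d e => (Nat.totient d : ℝ) * x ^ (m + 1) / (m + 1))]
  rw [← Finset.sum_div, ← Finset.sum_mul, ← Nat.cast_sum, Nat.sum_totient]
  push_cast
  field_simp

end Aux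

/-- For 0 < x < 1, exp(x/(1-x)) = ∏_{n=1}^∞ (1 - x^n)^(-φ(n)/n). -/
theorem exp_eq_totient_product (x : ℝ) (hx0 : 0 < x) (hx1 : x < 1) :
    Filter.Tendsto
      (fun N : ℕ => ∏ n ∈ Finset.Icc 1 N,
        (1 - x ^ n) ^ (-(Nat.totient n : ℝ) / (n : ℝ)))
      Filter.atTop (nhds (Real.exp (x / (1 - x)))) := by
  -- geometric series
  have hgeo : HasSum (fun m : ℕ => x ^ (m + 1)) (x / (1 - x)) := by
    have h := (hasSum_geometric_of_lt_one hx0.le hx1).mul_left x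
    have e1 : (fun m : ℕ => x ^ (m + 1)) = fun m : ℕ => x * x ^ m := by
      funext m; rw [pow_succ']
    rw [e1, div_eq_mul_inv]
    exact h
  -- summability over the sigma type
  have hG : Summable (fun q : Tt => gfun x (eT q)) := by
    rw [summable_sigma_of_nonneg (fun q => gfun_nonneg hx0 _)]
    refine ⟨fun m => (gfun_fiber m).summable, ?_⟩
    apply hgeo.summable.congr
    intro m
    exact ((gfun_fiber (x := x) m).tsum_eq).symm
  have hGsum : HasSum (fun q : Tt => gfun x (eT q)) (x / (1 - x)) :=
    HasSum.sigma_of_hasSum hgeo (fun m => gfun_fiber m) hG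
  have hg : HasSum (gfun x) (x / (1 - x)) := eT.hasSum_iff.mp hGsum
  have hf : HasSum (fun n : ℕ =>
      ((Nat.totient (n + 1) : ℝ) / (n + 1)) * (-Real.log (1 - x ^ (n + 1))))
      (x / (1 - x)) := hg.prod_fiberwise (gfun_row hx0 hx1)
  have hsum := hf.tendsto_sum_nat
  have hexp := (Real.continuous_exp.tendsto _).comp hsum
  have key : ∀ N : ℕ, ∏ n ∈ Finset.Icc 1 N,
      (1 - x ^ n) ^ (-(Nat.totient n : ℝ) / (n : ℝ))
      = Real.exp (∑ i ∈ Finset.range N,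
          ((Nat.totient (i + 1) : ℝ) / (i + 1)) * (-Real.log (1 - x ^ (i + 1)))) := by
    intro N
    rw [Real.exp_sum]
    rw [← Finset.Ico_add_one_right_eq_Icc, Finset.prod_Ico_eq_prod_range]
    refine Finset.prod_congr rfl fun i _ => ?_
    have hpos : 0 < 1 - x ^ (1 + i) := by
      have : x ^ (1 + i) < 1 := pow_lt_one₀ hx0.le hx1 (by omega)
      linarith
    rw [Real.rpow_def_of_pos hpos]
    rw [add_comm 1 i]
    congr 1
    push_cast
    ring
  have : (fun N : ℕ => ∏ n ∈ Finset.Icc 1 N,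
      (1 - x ^ n) ^ (-(Nat.totient n : ℝ) / (n : ℝ)))
      = fun N : ℕ => Real.exp (∑ i ∈ Finset.range N,
          ((Nat.totient (i + 1) : ℝ) / (i + 1)) * (-Real.log (1 - x ^ (i + 1)))) := by
    funext N; exact key N
  rw [this]
  exact hexp
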